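/- Let B be a building set on a finite ground set V. Two blocks B₀, B₀' ∈ B are exchangeable (i.e., there exist maximal B-nested sets N, N' with N \ {B₀} = N' \ {B₀'}) if and only if there exist a block P ∈ B and vertices v ∈ B₀ \ B₀' and v' ∈ B₀' \ B₀ such that B₀ ⊊ P, B₀' ⊊ P, and for every C ∈ B with C ⊆ P, C ∩ B₀ ≠ ∅, C ⊄ B₀ one has v' ∈ C, and for every C' ∈ B with C' ⊆ P, C' ∩ B₀' ≠ ∅, C' ⊄ B₀' one has v ∈ C'. -/

import Mathlib

open scoped Classical

variable {V : Type*} [Fintype V] [DecidableEq V]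

/-- A building set on the finite ground set `V`. -/
def IsBuildingSet (B : Finset (Finset V)) : Prop :=
  (∀ b ∈ B, b.Nonempty) ∧
  (∀ b₁ ∈ B, ∀ b₂ ∈ B, (b₁ ∩ b₂).Nonempty → b₁ ∪ b₂ ∈ B) ∧
  (∀ v : V, {v} ∈ B)

/-- `M` is an inclusion-maximal block of `B` strictly contained in `P`. -/
def MaxIn (B : Finset (Finset V)) (P M : Finset V) : Prop :=
  M ∈ B ∧ M ⊂ P ∧ ∀ C ∈ B, M ⊂ C → ¬ C ⊂ P

/-- The block `P` is elementary. -/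
def Elementary (B : Finset (Finset V)) (P : Finset V) : Prop :=
  ∀ B' ∈ B, ∀ B'' ∈ B, B' ≠ P → B'' ≠ P → P = B' ∪ B'' → B' ∩ B'' = ∅

/-- The connected components of `U`: inclusion-maximal blocks of `B` contained in `U`. -/
noncomputable def ccSet (B : Finset (Finset V)) (U : Finset V) : Finset (Finset V) :=
  B.filter (fun K => K ⊆ U ∧ ∀ C ∈ B, C ⊆ U → K ⊆ C → K = C)

/-- A `B`-nested set: contained in `B`, containing all maximal elements of `B`,
and such that for every subset `X` whose union lies in `B`, the union lies in `X`. -/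
def IsNested (B N : Finset (Finset V)) : Prop :=
  N ⊆ B ∧
  (∀ K ∈ B, (∀ C ∈ B, K ⊆ C → K = C) → K ∈ N) ∧
  (∀ X ⊆ N, X.sup id ∈ B → X.sup id ∈ X)

/-- A maximal `B`-nested set (inclusion-maximal among `B`-nested sets). -/
def IsMaxNested (B N : Finset (Finset V)) : Prop :=
  IsNested B N ∧ ∀ N', IsNested B N' → N ⊆ N' → N = N'

/-- Two blocks are exchangeable if two maximal nested sets differ exactly by them. -/
def ExchangeableB (B : Finset (Finset V)) (b b' : Finset V) : Prop :=
  b ≠ b' ∧ ∃ N N', IsMaxNested B N ∧ IsMaxNested B N' ∧ b ∈ N ∧ b' ∈ N' ∧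
    N.erase b = N'.erase b'

/-- `P` is the parent of `b` in `N`: the unique minimal element of `{C ∈ N | b ⊊ C}`. -/
def IsParent (N : Finset (Finset V)) (b P : Finset V) : Prop :=
  P ∈ N ∧ b ⊂ P ∧ ∀ C ∈ N, b ⊂ C → P ⊆ C

/-- `(b, b', P)` is an exchange frame. -/
def IsExchangeFrame (B : Finset (Finset V)) (b b' P : Finset V) : Prop :=
  ∃ N N', IsMaxNested B N ∧ IsMaxNested B N' ∧ b ∈ N ∧ b' ∈ N' ∧ b ≠ b' ∧
    N.erase b = N'.erase b' ∧ IsParent N b P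

/-- Characteristic vector of a subset of `V` in `ℝ^V`. -/
def chi (S : Finset V) : V → ℝ := fun v => if v ∈ S then 1 else 0

/-- The root of `C` in the nested set `N`. -/
noncomputable def root (N : Finset (Finset V)) (C : Finset V) : Finset V :=
  C \ (N.filter (fun D => D ⊂ C)).sup id

set_option linter.unusedSectionVars false

namespace Stmt6Aux

variable {B N : Finset (Finset V)} {A C K S W : Finset V} {u w : V}

lemma mem_ccSet : K ∈ ccSet B S ↔ K ∈ B ∧ K ⊆ S ∧ ∀ C ∈ B, C ⊆ S → K ⊆ C → K = C := by
  simp [ccSet, Finset.mem_filter]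

lemma exists_maxblock (hW : W ∈ B) (hWS : W ⊆ S) : ∃ K ∈ ccSet B S, W ⊆ K := by
  obtain ⟨K, hK, hmax⟩ := (B.filter (fun C => W ⊆ C ∧ C ⊆ S)).exists_max_image Finset.card
    ⟨W, by simp [hW, hWS]⟩
  rw [Finset.mem_filter] at hK
  refine ⟨K, mem_ccSet.mpr ⟨hK.1, hK.2.2, fun C hC hCS hKC => ?_⟩, hK.2.1⟩
  exact Finset.eq_of_subset_of_card_le hKC
    (hmax C (Finset.mem_filter.mpr ⟨hC, hK.2.1.trans hKC, hCS⟩))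

lemma cc_eq_of_inter (hB : IsBuildingSet B) (hK : K ∈ ccSet B S) (hL : C ∈ ccSet B S)
    (h : (K ∩ C).Nonempty) : K = C := by
  rw [mem_ccSet] at hK hL
  have hu : K ∪ C ∈ B := hB.2.1 _ hK.1 _ hL.1 h
  have h1 : K = K ∪ C := hK.2.2 _ hu (Finset.union_subset hK.2.1 hL.2.1) Finset.subset_union_left
  have h2 : C ⊆ K := h1 ▸ Finset.subset_union_right
  exact (hL.2.2 _ hK.1 hK.2.1 h2).symm

lemma exists_cc_mem (hB : IsBuildingSet B) (hu : u ∈ S) : ∃ K ∈ ccSet B S, u ∈ K := by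
  obtain ⟨K, hK, hsub⟩ := exists_maxblock (hB.2.2 u) (Finset.singleton_subset_iff.mpr hu)
  exact ⟨K, hK, hsub (Finset.mem_singleton_self u)⟩

lemma nested_comp (hB : IsBuildingSet B) (hN : IsNested B N) (hA : A ∈ N) (hC : C ∈ N)
    (h : (A ∩ C).Nonempty) : A ⊆ C ∨ C ⊆ A := by
  have hu : A ∪ C ∈ B := hB.2.1 _ (hN.1 hA) _ (hN.1 hC) h
  have hsup : ({A, C} : Finset (Finset V)).sup id = A ∪ C := by
    simp [Finset.sup_insert, Finset.sup_singleton]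
  have hsub : ({A, C} : Finset (Finset V)) ⊆ N := by
    intro x hx
    rcases Finset.mem_insert.mp hx with h1 | h1
    · exact h1 ▸ hA
    · exact (Finset.mem_singleton.mp h1) ▸ hC
  have hX := hN.2.2 {A, C} hsub (hsup ▸ hu)
  rw [hsup] at hX
  rcases Finset.mem_insert.mp hX with h1 | h1
  · exact Or.inr (by rw [← h1]; exact Finset.subset_union_right)
  · exact Or.inl (by rw [← Finset.mem_singleton.mp h1]; exact Finset.subset_union_left)

lemma chain_min {F : Finset (Finset V)} (hne : F.Nonempty)
    (hch : ∀ A ∈ F, ∀ C ∈ F, A ⊆ C ∨ C ⊆ A) : ∃ P ∈ F, ∀ C ∈ F, P ⊆ C := by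
  obtain ⟨P, hP, hmin⟩ := F.exists_min_image Finset.card hne
  refine ⟨P, hP, fun C hC => (hch P hP C hC).elim id (fun h => ?_)⟩
  rw [Finset.eq_of_subset_of_card_le h (hmin C hC)]

lemma exists_min_mem (hB : IsBuildingSet B) (hN : IsNested B N) (hA0 : A ∈ N) (hu : u ∈ A) :
    ∃ D ∈ N, u ∈ D ∧ ∀ C ∈ N, u ∈ C → D ⊆ C := by
  obtain ⟨D, hD, hmin⟩ := chain_min (F := N.filter (fun C => u ∈ C))
    ⟨A, Finset.mem_filter.mpr ⟨hA0, hu⟩⟩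
    (fun X hX Y hY => nested_comp hB hN (Finset.mem_filter.mp hX).1 (Finset.mem_filter.mp hY).1
      ⟨u, Finset.mem_inter.mpr ⟨(Finset.mem_filter.mp hX).2, (Finset.mem_filter.mp hY).2⟩⟩)
  exact ⟨D, (Finset.mem_filter.mp hD).1, (Finset.mem_filter.mp hD).2,
    fun C hC huC => hmin C (Finset.mem_filter.mpr ⟨hC, huC⟩)⟩

lemma exists_parent (hB : IsBuildingSet B) (hN : IsNested B N) {b : Finset V} (hbB : b ∈ B)
    (h : ∃ C ∈ N, b ⊂ C) : ∃ P ∈ N, b ⊂ P ∧ ∀ C ∈ N, b ⊂ C → P ⊆ C := by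
  obtain ⟨C0, hC0, hbC0⟩ := h
  obtain ⟨P, hP, hmin⟩ := chain_min (F := N.filter (fun C => b ⊂ C))
    ⟨C0, Finset.mem_filter.mpr ⟨hC0, hbC0⟩⟩
    (fun X hX Y hY => by
      obtain ⟨z, hz⟩ := hB.1 b hbB
      exact nested_comp hB hN (Finset.mem_filter.mp hX).1 (Finset.mem_filter.mp hY).1
        ⟨z, Finset.mem_inter.mpr ⟨(Finset.mem_filter.mp hX).2.1 hz,
          (Finset.mem_filter.mp hY).2.1 hz⟩⟩)
  exact ⟨P, (Finset.mem_filter.mp hP).1, (Finset.mem_filter.mp hP).2,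
    fun C hC hbC => hmin C (Finset.mem_filter.mpr ⟨hC, hbC⟩)⟩

lemma mem_root_iff : u ∈ root N C ↔ u ∈ C ∧ ∀ D ∈ N, D ⊂ C → u ∉ D := by
  simp only [root, Finset.mem_sdiff, Finset.mem_sup, Finset.mem_filter, id]
  constructor
  · rintro ⟨h1, h2⟩; exact ⟨h1, fun D hD hDC hu => h2 ⟨D, ⟨hD, hDC⟩, hu⟩⟩
  · rintro ⟨h1, h2⟩; exact ⟨h1, fun ⟨D, ⟨hD, hDC⟩, hu⟩ => h2 D hD hDC hu⟩

lemma root_subset : root N C ⊆ C := Finset.sdiff_subset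

lemma root_nonempty (hN : IsNested B N) (hA : A ∈ N) : (root N A).Nonempty := by
  by_contra h
  have h1 : A ⊆ (N.filter (fun D => D ⊂ A)).sup id := by
    intro x hx
    by_contra hx2
    exact h ⟨x, Finset.mem_sdiff.mpr ⟨hx, hx2⟩⟩
  have h2 : (N.filter (fun D => D ⊂ A)).sup id ⊆ A :=
    Finset.sup_le (fun C hC => (Finset.mem_filter.mp hC).2.subset)
  have h3 : (N.filter (fun D => D ⊂ A)).sup id = A := Finset.Subset.antisymm h2 h1
  have h4 := hN.2.2 _ (Finset.filter_subset _ _) (h3 ▸ hN.1 hA)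
  rw [h3] at h4
  exact ssubset_irrefl A (Finset.mem_filter.mp h4).2

lemma root_eq_of_mem (hB : IsBuildingSet B) (hN : IsNested B N) (hA : A ∈ N) (hC : C ∈ N)
    (hu : u ∈ root N A) (hu' : u ∈ root N C) : A = C := by
  by_contra hne
  have hcomp := nested_comp hB hN hA hC
    ⟨u, Finset.mem_inter.mpr ⟨root_subset hu, root_subset hu'⟩⟩
  rcases hcomp with h | h
  · exact (mem_root_iff.mp hu').2 A hA (Finset.ssubset_iff_subset_ne.mpr ⟨h, hne⟩)
      (root_subset hu)
  · exact (mem_root_iff.mp hu).2 C hC (Finset.ssubset_iff_subset_ne.mpr ⟨h, Ne.symm hne⟩)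
      (root_subset hu')

lemma subset_sup {X : Finset (Finset V)} {y : Finset V} (h : y ∈ X) : y ⊆ X.sup id :=
  Finset.le_sup (f := id) h

lemma sup_mono' {X Y : Finset (Finset V)} (h : X ⊆ Y) : X.sup id ⊆ Y.sup id :=
  Finset.sup_mono h

lemma compAdd (hB : IsBuildingSet B) (hN : IsNested B N) (hA : A ∈ N) {S : Finset V}
    (hSA : S ⊆ A) (hsub : ∀ C ∈ N, C ⊂ A → C ⊆ S) (hK : K ∈ ccSet B S) :
    IsNested B (insert K N) := by
  obtain ⟨hKB, hKS, hKmax⟩ := mem_ccSet.mp hK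
  have hKne : K.Nonempty := hB.1 K hKB
  refine ⟨?_, fun K' hK' hmax => Finset.mem_insert_of_mem (hN.2.1 K' hK' hmax), ?_⟩
  · intro x hx
    rcases Finset.mem_insert.mp hx with h | h
    · exact h ▸ hKB
    · exact hN.1 h
  intro X hX hsupB
  by_cases hKX : K ∈ X
  swap
  · have : X ⊆ N := fun x hx => (Finset.mem_insert.mp (hX hx)).resolve_left
      (fun h => hKX (h ▸ hx))
    exact hN.2.2 X this hsupB
  have hY : X.erase K ⊆ N := by
    intro x hx
    rcases Finset.mem_insert.mp (hX (Finset.mem_of_mem_erase hx)) with h | h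
    · exact absurd h (Finset.ne_of_mem_erase hx)
    · exact h
  have hXsup : X.sup id = K ∪ (X.erase K).sup id := by
    conv_lhs => rw [← Finset.insert_erase hKX]
    rw [Finset.sup_insert]; rfl
  by_cases h1 : ∃ y ∈ X.erase K, A ⊆ y
  · obtain ⟨y, hy, hAy⟩ := h1
    have h2 : X.sup id = (X.erase K).sup id := by
      apply Finset.Subset.antisymm
      · rw [hXsup]
        exact Finset.union_subset (((hKS.trans hSA).trans hAy).trans (subset_sup hy)) le_rfl
      · exact sup_mono' (Finset.erase_subset _ _)
    rw [h2] at hsupB ⊢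
    exact Finset.mem_of_mem_erase (hN.2.2 _ hY hsupB)
  · push_neg at h1
    have htri : ∀ y ∈ X.erase K, y ⊂ A ∨ (y ∩ A) = ∅ := by
      intro y hy
      by_cases hint : (y ∩ A).Nonempty
      · rcases nested_comp hB hN (hY hy) hA hint with h | h
        · exact Or.inl (Finset.ssubset_iff_subset_ne.mpr ⟨h, fun he => h1 y hy (he ▸ le_rfl)⟩)
        · exact absurd h (h1 y hy)
      · exact Or.inr (Finset.not_nonempty_iff_eq_empty.mp hint)
    by_cases h2 : ∃ y ∈ X.erase K, (y ∩ A) = ∅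
    · exfalso
      obtain ⟨y₀, hy₀, hy₀A⟩ := h2
      have hTB : X.sup id ∪ A ∈ B := by
        apply hB.2.1 _ hsupB _ (hN.1 hA)
        obtain ⟨z, hz⟩ := hKne
        exact ⟨z, Finset.mem_inter.mpr ⟨subset_sup hKX hz, hSA (hKS hz)⟩⟩
      have hKA : K ⊆ A := hKS.trans hSA
      have hsupZ : (insert A (X.erase K)).sup id = X.sup id ∪ A := by
        rw [Finset.sup_insert, hXsup]
        show A ∪ (X.erase K).sup id = K ∪ (X.erase K).sup id ∪ A
        ext x
        simp only [Finset.mem_union]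
        constructor
        · rintro (h | h)
          · exact Or.inr h
          · exact Or.inl (Or.inr h)
        · rintro ((h | h) | h)
          · exact Or.inl (hKA h)
          · exact Or.inr h
          · exact Or.inl h
      have hZN : insert A (X.erase K) ⊆ N := by
        intro x hx
        rcases Finset.mem_insert.mp hx with h | h
        · exact h ▸ hA
        · exact hY h
      have hmem := hN.2.2 _ hZN (hsupZ ▸ hTB)
      rw [hsupZ] at hmem
      rcases Finset.mem_insert.mp hmem with h | h
      · have hy₀sub : y₀ ⊆ A := by
          rw [← h]
          exact ((subset_sup hy₀).trans (sup_mono' (Finset.erase_subset _ _))).trans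
            Finset.subset_union_left
        obtain ⟨z, hz⟩ := hB.1 y₀ (hN.1 (hY hy₀))
        exact (Finset.eq_empty_iff_forall_notMem.mp hy₀A z)
          (Finset.mem_inter.mpr ⟨hz, hy₀sub hz⟩)
      · exact h1 _ h Finset.subset_union_right
    · push_neg at h2
      have hally : ∀ y ∈ X.erase K, y ⊂ A := by
        intro y hy
        rcases htri y hy with h | h
        · exact h
        · exact absurd h (Finset.nonempty_iff_ne_empty.mp (h2 y hy))
      have hTS : X.sup id ⊆ S := by
        rw [hXsup]
        exact Finset.union_subset hKS (Finset.sup_le (fun y hy => hsub y (hY hy) (hally y hy)))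
      have : K = X.sup id := hKmax _ hsupB hTS (subset_sup hKX)
      rw [← this]
      exact hKX

lemma mem_of_maxNested (hN : IsMaxNested B N) (h : IsNested B (insert K N)) : K ∈ N := by
  have := hN.2 _ h (Finset.subset_insert _ _)
  rw [this]
  exact Finset.mem_insert_self _ _

lemma growInside (hB : IsBuildingSet B) (hN : IsMaxNested B N) (hA : A ∈ N) {S : Finset V}
    (hSA : S ⊆ A) (hsub : ∀ C ∈ N, C ⊂ A → C ⊆ S) (hW : W ∈ B) (hWS : W ⊆ S) :
    ∃ K ∈ N, W ⊆ K ∧ K ⊆ S := by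
  obtain ⟨K, hK, hWK⟩ := exists_maxblock hW hWS
  exact ⟨K, mem_of_maxNested hN (compAdd hB hN.1 hA hSA hsub hK), hWK, (mem_ccSet.mp hK).2.1⟩

lemma root_singleton (hB : IsBuildingSet B) (hN : IsMaxNested B N) (hA : A ∈ N) :
    ∃ r, root N A = {r} := by
  obtain ⟨u, hu⟩ := root_nonempty hN.1 hA
  refine ⟨u, Finset.eq_singleton_iff_unique_mem.mpr ⟨hu, fun w hw => ?_⟩⟩
  by_contra hwu
  have husup : u ∉ (N.filter (fun D => D ⊂ A)).sup id := (Finset.mem_sdiff.mp hu).2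
  have hwsup : w ∉ (N.filter (fun D => D ⊂ A)).sup id := (Finset.mem_sdiff.mp hw).2
  have hSA : (N.filter (fun D => D ⊂ A)).sup id ∪ {u} ⊆ A := Finset.union_subset
    (Finset.sup_le (fun C hC => (Finset.mem_filter.mp hC).2.subset))
    (Finset.singleton_subset_iff.mpr (root_subset hu))
  have hsub : ∀ C ∈ N, C ⊂ A → C ⊆ (N.filter (fun D => D ⊂ A)).sup id ∪ {u} := by
    intro C hC hCA
    have h1 : C ⊆ (N.filter (fun D => D ⊂ A)).sup id :=
      subset_sup (Finset.mem_filter.mpr ⟨hC, hCA⟩)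
    exact h1.trans Finset.subset_union_left
  obtain ⟨K, hKN, hKu, hKS⟩ := growInside hB hN hA hSA hsub (hB.2.2 u)
    (Finset.singleton_subset_iff.mpr (Finset.mem_union_right _ (Finset.mem_singleton_self u)))
  have hKA : K ⊂ A := by
    refine Finset.ssubset_iff_subset_ne.mpr ⟨hKS.trans hSA, fun he => ?_⟩
    have : w ∈ (N.filter (fun D => D ⊂ A)).sup id ∪ {u} := hKS (he ▸ root_subset hw)
    rcases Finset.mem_union.mp this with h | h
    · exact hwsup h
    · exact hwu (Finset.mem_singleton.mp h)
  have : K ⊆ (N.filter (fun D => D ⊂ A)).sup id :=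
    subset_sup (Finset.mem_filter.mpr ⟨hKN, hKA⟩)
  exact husup (this (hKu (Finset.mem_singleton_self u)))
lemma constrNested (hB : IsBuildingSet B) (hNB : N ⊆ B)
    (hcc : ccSet B Finset.univ ⊆ N)
    (hiii : ∀ A ∈ N, ∃ r ∈ A, (∀ C ∈ N, C ⊂ A → r ∉ C) ∧ ccSet B (A \ {r}) ⊆ N) :
    IsNested B N := by
  refine ⟨hNB, ?_, ?_⟩
  · intro K hK hmax
    exact hcc (mem_ccSet.mpr ⟨hK, Finset.subset_univ _, fun C hC _ h => hmax C hC h⟩)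
  intro X hX hsupB
  by_cases hX0 : X = ∅
  · subst hX0
    rw [Finset.sup_empty] at hsupB
    obtain ⟨z, hz⟩ := hB.1 _ hsupB
    exact absurd hz (by simp [Finset.bot_eq_empty])
  obtain ⟨Q, hQ, hWQ⟩ := exists_maxblock hsupB (Finset.subset_univ _)
  obtain ⟨A, hA, hAmin⟩ := (N.filter (fun C => X.sup id ⊆ C)).exists_min_image Finset.card
    ⟨Q, Finset.mem_filter.mpr ⟨hcc hQ, hWQ⟩⟩
  rw [Finset.mem_filter] at hA
  by_cases hAX : A ∈ X
  · have h1 : A ⊆ X.sup id := subset_sup hAX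
    have h2 : X.sup id = A := Finset.Subset.antisymm hA.2 h1
    rw [h2]; exact hAX
  · exfalso
    obtain ⟨r, hrA, hrsub, hrcc⟩ := hiii A hA.1
    have hWr : X.sup id ⊆ A \ {r} := by
      show X.sup id ≤ A \ {r}
      apply Finset.sup_le
      intro x hx
      have hxA : x ⊂ A := Finset.ssubset_iff_subset_ne.mpr
        ⟨(subset_sup hx).trans hA.2, fun he => hAX (he ▸ hx)⟩
      intro z hz
      refine Finset.mem_sdiff.mpr ⟨hxA.subset hz, fun hzr => ?_⟩
      exact hrsub x (hX hx) hxA ((Finset.mem_singleton.mp hzr) ▸ hz)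
    obtain ⟨K, hK, hWK⟩ := exists_maxblock hsupB hWr
    have hKA : K ⊂ A := Finset.ssubset_iff_subset_ne.mpr
      ⟨((mem_ccSet.mp hK).2.1).trans Finset.sdiff_subset, fun he => by
        have : r ∈ A \ {r} := (mem_ccSet.mp hK).2.1 (he ▸ hrA)
        simp at this⟩
    have hcard := hAmin K (Finset.mem_filter.mpr ⟨hrcc hK, hWK⟩)
    exact absurd (Finset.eq_of_subset_of_card_le hKA.subset hcard) hKA.ne

lemma maxCrit (hB : IsBuildingSet B) (hNB : N ⊆ B)
    (hcc : ccSet B Finset.univ ⊆ N)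
    (hiii : ∀ A ∈ N, ∃ r ∈ A, (∀ C ∈ N, C ⊂ A → r ∉ C) ∧ ccSet B (A \ {r}) ⊆ N)
    (hcov : ∀ u : V, ∃ A ∈ N, u ∈ A ∧ ∀ C ∈ N, C ⊂ A → u ∉ C) :
    IsMaxNested B N := by
  have hnest := constrNested hB hNB hcc hiii
  have hsingle : ∀ A ∈ N, ∀ u ∈ root N A, ∀ w ∈ root N A, u = w := by
    intro A hA u hu w hw
    obtain ⟨r, hrA, hrsub, hrcc⟩ := hiii A hA
    have key : ∀ z ∈ root N A, z = r := by
      intro z hz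
      by_contra hzr
      have hzA : z ∈ A \ {r} := Finset.mem_sdiff.mpr ⟨root_subset hz, by simp [hzr]⟩
      obtain ⟨K, hK, hzK⟩ := exists_cc_mem hB hzA
      have hKA : K ⊂ A := Finset.ssubset_iff_subset_ne.mpr
        ⟨((mem_ccSet.mp hK).2.1).trans Finset.sdiff_subset, fun he => by
          have : r ∈ A \ {r} := (mem_ccSet.mp hK).2.1 (he ▸ hrA)
          simp at this⟩
      exact (mem_root_iff.mp hz).2 K (hrcc hK) hKA hzK
    rw [key u hu, key w hw]
  refine ⟨hnest, fun N'' hN'' hsub => ?_⟩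
  choose f hf using hcov
  have hVN : Fintype.card V ≤ N.card := by
    have h := Finset.card_le_card_of_injOn (f := f) (s := (Finset.univ : Finset V)) (t := N)
      (fun u _ => (hf u).1) ?_
    · simpa using h
    · intro u _ w _ he
      have hu : u ∈ root N (f u) := mem_root_iff.mpr ⟨(hf u).2.1, (hf u).2.2⟩
      have hw : w ∈ root N (f w) := mem_root_iff.mpr ⟨(hf w).2.1, (hf w).2.2⟩
      rw [he] at hu
      exact hsingle _ (hf w).1 u hu w hw
  have hNV : N''.card ≤ Fintype.card V := by
    have h := Finset.card_le_card_of_injOn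
      (f := fun (a : {x // x ∈ N''}) => (root_nonempty hN'' a.2).choose)
      (s := N''.attach) (t := Finset.univ) (fun a _ => Finset.mem_univ _) ?_
    · simpa using h
    · intro a _ c _ he
      have ha := (root_nonempty hN'' a.2).choose_spec
      have hc := (root_nonempty hN'' c.2).choose_spec
      have he' : (root_nonempty hN'' a.2).choose = (root_nonempty hN'' c.2).choose := he
      rw [he'] at ha
      exact Subtype.ext (root_eq_of_mem hB hN'' a.2 c.2 ha hc)
  have h1 : N''.card ≤ N.card := hNV.trans hVN
  exact Finset.eq_of_subset_of_card_le hsub h1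
def GSpec (B : Finset (Finset V)) (S : Finset V) (F : Finset (Finset V)) : Prop :=
  F ⊆ B ∧ (∀ C ∈ F, C ⊆ S) ∧ ccSet B S ⊆ F ∧
  (∀ A ∈ F, ∃ r ∈ A, (∀ C ∈ F, C ⊂ A → r ∉ C) ∧ ccSet B (A \ {r}) ⊆ F) ∧
  (∀ u ∈ S, ∃ A ∈ F, u ∈ A ∧ ∀ C ∈ F, C ⊂ A → u ∉ C)

lemma cc_max (hK : K ∈ ccSet B S) : ∀ D ∈ B, D ⊆ S → K ⊆ D → K = D :=
  (mem_ccSet.mp hK).2.2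

lemma cc_sub_S (hK : K ∈ ccSet B S) : K ⊆ S := (mem_ccSet.mp hK).2.1

lemma cc_mem_B (hK : K ∈ ccSet B S) : K ∈ B := (mem_ccSet.mp hK).1

lemma buildDown (hB : IsBuildingSet B) : ∀ (n : ℕ) (S : Finset V), S.card ≤ n →
    ∃ F, GSpec B S F := by
  intro n
  induction n with
  | zero =>
    intro S hS
    have hS0 : S = ∅ := Finset.card_eq_zero.mp (Nat.le_zero.mp hS)
    subst hS0
    refine ⟨∅, ?_, ?_, ?_, ?_, ?_⟩
    · exact Finset.empty_subset _
    · intro C hC; simp at hC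
    · intro K hK
      obtain ⟨z, hz⟩ := hB.1 K (cc_mem_B hK)
      exact absurd (cc_sub_S hK hz) (Finset.notMem_empty z)
    · intro A hA; simp at hA
    · intro u hu; simp at hu
  | succ n ih =>
    intro S hS
    have hchoice : ∀ K : {K // K ∈ ccSet B S}, ∃ p : V × Finset (Finset V),
        p.1 ∈ K.1 ∧ GSpec B (K.1 \ {p.1}) p.2 := by
      rintro ⟨K, hK⟩
      obtain ⟨x, hx⟩ := hB.1 K (cc_mem_B hK)
      have hcard : (K \ {x}).card ≤ n := by
        have h1 : (K \ {x}).card < K.card := Finset.card_lt_card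
          (Finset.sdiff_ssubset (Finset.singleton_subset_iff.mpr hx) (Finset.singleton_nonempty x))
        have h2 : K.card ≤ S.card := Finset.card_le_card (cc_sub_S hK)
        omega
      obtain ⟨F, hF⟩ := ih (K \ {x}) hcard
      exact ⟨(x, F), hx, hF⟩
    choose p hp using hchoice
    set F : Finset (Finset V) :=
      ccSet B S ∪ (ccSet B S).attach.biUnion (fun K => (p K).2) with hFdef
    have hmemF : ∀ C, C ∈ F ↔ C ∈ ccSet B S ∨ ∃ K : {K // K ∈ ccSet B S}, C ∈ (p K).2 := by
      intro C
      simp only [hFdef, Finset.mem_union, Finset.mem_biUnion, Finset.mem_attach, true_and]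
    have hdisj : ∀ K K' : {K // K ∈ ccSet B S}, K.1 ≠ K'.1 → ∀ z ∈ K.1, z ∉ K'.1 := by
      intro K K' hne z hz hz'
      exact hne (cc_eq_of_inter hB K.2 K'.2 ⟨z, Finset.mem_inter.mpr ⟨hz, hz'⟩⟩)
    have hpc : ∀ K : {K // K ∈ ccSet B S}, ∀ C ∈ (p K).2, C ⊆ K.1 \ {(p K).1} :=
      fun K => (hp K).2.2.1
    -- no cc-element of S is strictly inside anything contained in some K \ {x}
    have hccno : ∀ C ∈ ccSet B S, ∀ K : {K // K ∈ ccSet B S}, ∀ (A : Finset V),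
        A ⊆ K.1 \ {(p K).1} → ¬ C ⊂ A := by
      intro C hC K A hA hCA
      have h1 : C = K.1 := cc_max hC K.1 (cc_mem_B K.2) (cc_sub_S K.2)
        ((hCA.subset.trans hA).trans Finset.sdiff_subset)
      have h2 : (p K).1 ∈ C := h1 ▸ (hp K).1
      have h3 := hA (hCA.subset h2)
      exact (Finset.mem_sdiff.mp h3).2 (Finset.mem_singleton_self _)
    refine ⟨F, ?_, ?_, ?_, ?_, ?_⟩
    · -- F ⊆ B
      intro C hC
      rcases (hmemF C).mp hC with h | ⟨K, h⟩
      · exact cc_mem_B h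
      · exact ((hp K).2.1) h
    · -- C ⊆ S
      intro C hC
      rcases (hmemF C).mp hC with h | ⟨K, h⟩
      · exact cc_sub_S h
      · exact ((hpc K C h).trans Finset.sdiff_subset).trans (cc_sub_S K.2)
    · -- ccSet ⊆ F
      intro K hK
      exact (hmemF K).mpr (Or.inl hK)
    · -- main per-element condition
      intro A hA
      rcases (hmemF A).mp hA with h | ⟨K, h⟩
      · -- A is a component of S
        refine ⟨(p ⟨A, h⟩).1, (hp ⟨A, h⟩).1, ?_, ?_⟩
        · intro C hC hCA
          rcases (hmemF C).mp hC with h2 | ⟨K', h2⟩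
          · exact absurd (cc_max h2 A (cc_mem_B h) (cc_sub_S h) hCA.subset) hCA.ne
          · by_cases hKe : K'.1 = A
            · have : C ⊆ K'.1 \ {(p K').1} := hpc K' C h2
              intro hr
              have hr2 : (p ⟨A, h⟩).1 ∈ K'.1 \ {(p K').1} := this hr
              have : K' = ⟨A, h⟩ := Subtype.ext hKe
              subst this
              exact (Finset.mem_sdiff.mp hr2).2 (Finset.mem_singleton_self _)
            · intro hr
              obtain ⟨z, hz⟩ := hB.1 C (((hp K').2.1) h2)
              have hz1 : z ∈ K'.1 := ((hpc K' C h2).trans Finset.sdiff_subset) hz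
              have hz2 : z ∈ A := hCA.subset hz
              exact hdisj K' ⟨A, h⟩ hKe z hz1 hz2
        · intro D hD
          exact (hmemF D).mpr (Or.inr ⟨⟨A, h⟩, (hp ⟨A, h⟩).2.2.2.1 hD⟩)
      · -- A is in a recursive piece
        obtain ⟨r, hrA, hrsub, hrcc⟩ := (hp K).2.2.2.2.1 A h
        refine ⟨r, hrA, ?_, fun D hD => (hmemF D).mpr (Or.inr ⟨K, hrcc hD⟩)⟩
        intro C hC hCA
        rcases (hmemF C).mp hC with h2 | ⟨K', h2⟩
        · exact absurd hCA (hccno C h2 K A (hpc K A h))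
        · by_cases hKe : K'.1 = K.1
          · have : K' = K := Subtype.ext hKe
            subst this
            exact hrsub C h2 hCA
          · intro hrC
            obtain ⟨z, hz⟩ := hB.1 C (((hp K').2.1) h2)
            have hz1 : z ∈ K'.1 := ((hpc K' C h2).trans Finset.sdiff_subset) hz
            have hz2 : z ∈ K.1 := (((hpc K A h).trans Finset.sdiff_subset)) (hCA.subset hz)
            exact hdisj K' K hKe z hz1 hz2
    · -- covering
      intro u hu
      obtain ⟨K₀, hK₀, huK₀⟩ := exists_cc_mem hB hu
      by_cases hux : u = (p ⟨K₀, hK₀⟩).1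
      · refine ⟨K₀, (hmemF K₀).mpr (Or.inl hK₀), huK₀, ?_⟩
        intro C hC hCK
        rcases (hmemF C).mp hC with h2 | ⟨K', h2⟩
        · have := cc_max h2 K₀ (cc_mem_B hK₀) (cc_sub_S hK₀) hCK.subset
          exact absurd this hCK.ne
        · by_cases hKe : K'.1 = K₀
          · have : K' = ⟨K₀, hK₀⟩ := Subtype.ext hKe
            subst this
            intro huC
            have := hpc _ C h2 huC
            rw [hux] at this
            exact (Finset.mem_sdiff.mp this).2 (Finset.mem_singleton_self _)
          · intro huC
            obtain ⟨z, hz⟩ := hB.1 C (((hp K').2.1) h2)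
            exact hdisj K' ⟨K₀, hK₀⟩ hKe u (((hpc K' C h2).trans Finset.sdiff_subset) huC) huK₀
      · have hu2 : u ∈ K₀ \ {(p ⟨K₀, hK₀⟩).1} := Finset.mem_sdiff.mpr
          ⟨huK₀, by simpa using hux⟩
        obtain ⟨A, hA, huA, hAsub⟩ := (hp ⟨K₀, hK₀⟩).2.2.2.2.2 u hu2
        refine ⟨A, (hmemF A).mpr (Or.inr ⟨_, hA⟩), huA, ?_⟩
        intro C hC hCA
        rcases (hmemF C).mp hC with h2 | ⟨K', h2⟩
        · exact absurd hCA (hccno C h2 ⟨K₀, hK₀⟩ A (hpc _ A hA))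
        · by_cases hKe : K'.1 = K₀
          · have : K' = ⟨K₀, hK₀⟩ := Subtype.ext hKe
            subst this
            exact hAsub C h2 hCA
          · intro huC
            obtain ⟨z, hz⟩ := hB.1 C (((hp K').2.1) h2)
            have hz1 : z ∈ K'.1 := ((hpc K' C h2).trans Finset.sdiff_subset) hz
            have hz2 : z ∈ K₀ := ((hpc ⟨K₀, hK₀⟩ A hA).trans Finset.sdiff_subset) (hCA.subset hz)
            exact hdisj K' ⟨K₀, hK₀⟩ hKe z hz1 hz2
def USpec (B : Finset (Finset V)) (A : Finset V) (T : Finset (Finset V)) : Prop :=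
  T ⊆ B ∧ (∀ C ∈ T, A ⊂ C ∨ A ∩ C = ∅) ∧ ccSet B Finset.univ ⊆ insert A T ∧
  (∀ E ∈ T, ∃ r ∈ E, r ∉ A ∧ (∀ C ∈ T, C ⊂ E → r ∉ C) ∧ ccSet B (E \ {r}) ⊆ insert A T) ∧
  (∀ u : V, u ∉ A → ∃ E ∈ T, u ∈ E ∧ ∀ C ∈ T, C ⊂ E → u ∉ C)

lemma buildUpMax (hB : IsBuildingSet B) {A : Finset V} (hA : A ∈ B)
    (hmax : ∀ C ∈ B, A ⊆ C → A = C) : ∃ T, USpec B A T := by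
  have hAcc : A ∈ ccSet B Finset.univ :=
    mem_ccSet.mpr ⟨hA, Finset.subset_univ _, fun C hC _ h => hmax C hC h⟩
  have hchoice : ∀ Q : {Q // Q ∈ (ccSet B Finset.univ).erase A}, ∃ F, GSpec B Q.1 F :=
    fun Q => buildDown hB Q.1.card Q.1 le_rfl
  choose Fq hFq using hchoice
  set T : Finset (Finset V) :=
    ((ccSet B Finset.univ).erase A).attach.biUnion (fun Q => Fq Q) with hTdef
  have hmemT : ∀ C, C ∈ T ↔ ∃ Q : {Q // Q ∈ (ccSet B Finset.univ).erase A}, C ∈ Fq Q := by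
    intro C
    simp only [hTdef, Finset.mem_biUnion, Finset.mem_attach, true_and]
  have hQcc : ∀ Q : {Q // Q ∈ (ccSet B Finset.univ).erase A}, Q.1 ∈ ccSet B Finset.univ :=
    fun Q => Finset.mem_of_mem_erase Q.2
  have hQne : ∀ Q : {Q // Q ∈ (ccSet B Finset.univ).erase A}, Q.1 ≠ A :=
    fun Q => Finset.ne_of_mem_erase Q.2
  have hsubQ : ∀ (Q : {Q // Q ∈ (ccSet B Finset.univ).erase A}), ∀ C ∈ Fq Q, C ⊆ Q.1 :=
    fun Q => (hFq Q).2.1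
  have hdisjA : ∀ (Q : {Q // Q ∈ (ccSet B Finset.univ).erase A}), ∀ z ∈ Q.1, z ∉ A := by
    intro Q z hz hzA
    exact hQne Q (cc_eq_of_inter hB (hQcc Q) hAcc ⟨z, Finset.mem_inter.mpr ⟨hz, hzA⟩⟩)
  have hdisjQ : ∀ (Q Q' : {Q // Q ∈ (ccSet B Finset.univ).erase A}), Q.1 ≠ Q'.1 →
      ∀ z ∈ Q.1, z ∉ Q'.1 := by
    intro Q Q' hne z hz hz'
    exact hne (cc_eq_of_inter hB (hQcc Q) (hQcc Q') ⟨z, Finset.mem_inter.mpr ⟨hz, hz'⟩⟩)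
  have hcross : ∀ (Q : {Q // Q ∈ (ccSet B Finset.univ).erase A}), ∀ E ⊆ Q.1,
      ∀ C ∈ T, C ⊂ E → C ∈ Fq Q := by
    intro Q E hE C hC hCE
    obtain ⟨Q', hQ'⟩ := (hmemT C).mp hC
    by_cases he : Q'.1 = Q.1
    · have : Q' = Q := Subtype.ext he
      subst this; exact hQ'
    · obtain ⟨z, hz⟩ := hB.1 C ((hFq Q').1 hQ')
      exact absurd (hE (hCE.subset hz)) (hdisjQ Q' Q he z (hsubQ Q' C hQ' hz))
  refine ⟨T, ?_, ?_, ?_, ?_, ?_⟩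
  · intro C hC
    obtain ⟨Q, hQ⟩ := (hmemT C).mp hC
    exact (hFq Q).1 hQ
  · intro C hC
    obtain ⟨Q, hQ⟩ := (hmemT C).mp hC
    refine Or.inr (Finset.eq_empty_iff_forall_notMem.mpr (fun z hz => ?_))
    have := Finset.mem_inter.mp hz
    exact hdisjA Q z (hsubQ Q C hQ this.2) this.1
  · intro Q hQ
    by_cases he : Q = A
    · exact he ▸ Finset.mem_insert_self _ _
    · have hQe : Q ∈ (ccSet B Finset.univ).erase A := Finset.mem_erase.mpr ⟨he, hQ⟩
      have : Q ∈ ccSet B Q := mem_ccSet.mpr ⟨cc_mem_B hQ, Finset.Subset.refl _,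
        fun C _ hCQ hQC => Finset.Subset.antisymm hQC hCQ⟩
      exact Finset.mem_insert_of_mem ((hmemT Q).mpr ⟨⟨Q, hQe⟩, (hFq ⟨Q, hQe⟩).2.2.1 this⟩)
  · intro E hE
    obtain ⟨Q, hQ⟩ := (hmemT E).mp hE
    obtain ⟨r, hrE, hrsub, hrcc⟩ := (hFq Q).2.2.2.1 E hQ
    refine ⟨r, hrE, hdisjA Q r (hsubQ Q E hQ hrE), ?_,
      fun D hD => Finset.mem_insert_of_mem ((hmemT D).mpr ⟨Q, hrcc hD⟩)⟩
    intro C hC hCE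
    exact hrsub C (hcross Q E (hsubQ Q E hQ) C hC hCE) hCE
  · intro u hu
    obtain ⟨Q₀, hQ₀, huQ₀⟩ := exists_cc_mem hB (Finset.mem_univ u) (S := Finset.univ)
    have hQ₀A : Q₀ ≠ A := fun he => hu (he ▸ huQ₀)
    have hQ₀e : Q₀ ∈ (ccSet B Finset.univ).erase A := Finset.mem_erase.mpr ⟨hQ₀A, hQ₀⟩
    obtain ⟨E, hE, huE, hEsub⟩ := (hFq ⟨Q₀, hQ₀e⟩).2.2.2.2 u huQ₀
    refine ⟨E, (hmemT E).mpr ⟨_, hE⟩, huE, ?_⟩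
    intro C hC hCE
    exact hEsub C (hcross ⟨Q₀, hQ₀e⟩ E (hsubQ _ E hE) C hC hCE) hCE
lemma buildUp (hB : IsBuildingSet B) : ∀ (n : ℕ), ∀ A ∈ B, Fintype.card V - A.card ≤ n →
    ∃ T, USpec B A T := by
  intro n
  induction n with
  | zero =>
    intro A hA hn
    refine buildUpMax hB hA (fun C hC hAC => Finset.eq_of_subset_of_card_le hAC ?_)
    have h1 : C.card ≤ Fintype.card V := by
      simpa using Finset.card_le_card (Finset.subset_univ C)
    omega
  | succ n ih =>
    intro A hA hn
    by_cases hmax : ∀ C ∈ B, A ⊆ C → A = C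
    · exact buildUpMax hB hA hmax
    push_neg at hmax
    obtain ⟨C0, hC0, hAC0, hne0⟩ := hmax
    obtain ⟨A', hA'mem, hA'min⟩ := (B.filter (fun C => A ⊂ C)).exists_min_image Finset.card
      ⟨C0, Finset.mem_filter.mpr ⟨hC0, Finset.ssubset_iff_subset_ne.mpr ⟨hAC0, hne0⟩⟩⟩
    rw [Finset.mem_filter] at hA'mem
    obtain ⟨hA'B, hAA'⟩ := hA'mem
    obtain ⟨x, hxA', hxA⟩ := Finset.exists_of_ssubset hAA'
    have hcard' : Fintype.card V - A'.card ≤ n := by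
      have := Finset.card_lt_card hAA'
      have h2 : A'.card ≤ Fintype.card V := by
        simpa using Finset.card_le_card (Finset.subset_univ A')
      omega
    obtain ⟨T', hT'1, hT'2, hT'3, hT'4, hT'5⟩ := ih A' hA'B hcard'
    have hAsd : A ⊆ A' \ {x} := fun z hz => Finset.mem_sdiff.mpr
      ⟨hAA'.subset hz, fun he => hxA ((Finset.mem_singleton.mp he) ▸ hz)⟩
    have hAcc : A ∈ ccSet B (A' \ {x}) := by
      refine mem_ccSet.mpr ⟨hA, hAsd, fun C hC hCsd hAC => ?_⟩
      by_contra hne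
      have h1 := hA'min C (Finset.mem_filter.mpr ⟨hC, Finset.ssubset_iff_subset_ne.mpr ⟨hAC, hne⟩⟩)
      have h2 : C.card < A'.card := lt_of_le_of_lt (Finset.card_le_card hCsd)
        (Finset.card_lt_card (Finset.sdiff_ssubset (Finset.singleton_subset_iff.mpr hxA')
          (Finset.singleton_nonempty x)))
      omega
    have hchoice : ∀ K : {K // K ∈ (ccSet B (A' \ {x})).erase A}, ∃ F, GSpec B K.1 F :=
      fun K => buildDown hB K.1.card K.1 le_rfl
    choose Fk hFk using hchoice
    set T : Finset (Finset V) :=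
      insert A' (T' ∪ ((ccSet B (A' \ {x})).erase A).attach.biUnion (fun K => Fk K)) with hTdef
    have hmemT : ∀ C, C ∈ T ↔ C = A' ∨ C ∈ T' ∨
        ∃ K : {K // K ∈ (ccSet B (A' \ {x})).erase A}, C ∈ Fk K := by
      intro C
      simp only [hTdef, Finset.mem_insert, Finset.mem_union, Finset.mem_biUnion,
        Finset.mem_attach, true_and, or_assoc]
    have hKcc : ∀ K : {K // K ∈ (ccSet B (A' \ {x})).erase A}, K.1 ∈ ccSet B (A' \ {x}) :=
      fun K => Finset.mem_of_mem_erase K.2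
    have hKne : ∀ K : {K // K ∈ (ccSet B (A' \ {x})).erase A}, K.1 ≠ A :=
      fun K => Finset.ne_of_mem_erase K.2
    have hKsub : ∀ K : {K // K ∈ (ccSet B (A' \ {x})).erase A}, K.1 ⊆ A' \ {x} :=
      fun K => cc_sub_S (hKcc K)
    have hpsub : ∀ (K : {K // K ∈ (ccSet B (A' \ {x})).erase A}), ∀ C ∈ Fk K, C ⊆ K.1 :=
      fun K => (hFk K).2.1
    have hdisjKA : ∀ (K : {K // K ∈ (ccSet B (A' \ {x})).erase A}), ∀ z ∈ K.1, z ∉ A := by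
      intro K z hz hzA
      exact hKne K (cc_eq_of_inter hB (hKcc K) hAcc ⟨z, Finset.mem_inter.mpr ⟨hz, hzA⟩⟩)
    have hdisjKK : ∀ (K K' : {K // K ∈ (ccSet B (A' \ {x})).erase A}), K.1 ≠ K'.1 →
        ∀ z ∈ K.1, z ∉ K'.1 := by
      intro K K' hne z hz hz'
      exact hne (cc_eq_of_inter hB (hKcc K) (hKcc K') ⟨z, Finset.mem_inter.mpr ⟨hz, hz'⟩⟩)
    have hT'no : ∀ C ∈ T', ∀ E, E ⊆ A' → ¬ C ⊂ E := by
      intro C hC E hE hCE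
      rcases hT'2 C hC with h | h
      · exact lt_irrefl A' (lt_of_lt_of_le h ((hCE.subset.trans hE : C ≤ A')))
      · obtain ⟨z, hz⟩ := hB.1 C (hT'1 hC)
        exact Finset.eq_empty_iff_forall_notMem.mp h z
          (Finset.mem_inter.mpr ⟨hE (hCE.subset hz), hz⟩)
    have hA'subs : ∀ C ∈ T, C ⊂ A' → x ∉ C := by
      intro C hC hCA'
      rcases (hmemT C).mp hC with h | h | ⟨K, h⟩
      · exact absurd h hCA'.ne
      · exact absurd hCA' (hT'no C h A' le_rfl)
      · intro hx
        exact (Finset.mem_sdiff.mp ((hpsub K C h).trans (hKsub K) hx)).2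
          (Finset.mem_singleton_self x)
    have hcross : ∀ (K : {K // K ∈ (ccSet B (A' \ {x})).erase A}), ∀ E ⊆ K.1,
        ∀ C ∈ T, C ⊂ E → C ∈ Fk K := by
      intro K E hE C hC hCE
      have hEA' : E ⊆ A' \ {x} := hE.trans (hKsub K)
      rcases (hmemT C).mp hC with h | h | ⟨K', h⟩
      · exfalso
        have : x ∈ E := (h ▸ hCE.subset) hxA'
        exact (Finset.mem_sdiff.mp (hEA' this)).2 (Finset.mem_singleton_self x)
      · exact absurd hCE (hT'no C h E (hEA'.trans Finset.sdiff_subset))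
      · by_cases he : K'.1 = K.1
        · have : K' = K := Subtype.ext he
          subst this; exact h
        · exfalso
          obtain ⟨z, hz⟩ := hB.1 C ((hFk K').1 h)
          exact hdisjKK K' K he z (hpsub K' C h hz) (hE (hCE.subset hz))
    have hccsd : ccSet B (A' \ {x}) ⊆ insert A T := by
      intro D hD
      by_cases he : D = A
      · exact he ▸ Finset.mem_insert_self _ _
      · have hDe : D ∈ (ccSet B (A' \ {x})).erase A := Finset.mem_erase.mpr ⟨he, hD⟩
        have : D ∈ ccSet B D := mem_ccSet.mpr ⟨cc_mem_B hD, Finset.Subset.refl _,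
          fun C _ hCD hDC => Finset.Subset.antisymm hDC hCD⟩
        exact Finset.mem_insert_of_mem ((hmemT D).mpr
          (Or.inr (Or.inr ⟨⟨D, hDe⟩, (hFk ⟨D, hDe⟩).2.2.1 this⟩)))
    refine ⟨T, ?_, ?_, ?_, ?_, ?_⟩
    · intro C hC
      rcases (hmemT C).mp hC with h | h | ⟨K, h⟩
      · exact h ▸ hA'B
      · exact hT'1 h
      · exact (hFk K).1 h
    · intro C hC
      rcases (hmemT C).mp hC with h | h | ⟨K, h⟩
      · exact Or.inl (h ▸ hAA')
      · rcases hT'2 C h with h2 | h2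
        · exact Or.inl (hAA'.trans h2)
        · refine Or.inr (Finset.eq_empty_iff_forall_notMem.mpr (fun z hz => ?_))
          have := Finset.mem_inter.mp hz
          exact Finset.eq_empty_iff_forall_notMem.mp h2 z
            (Finset.mem_inter.mpr ⟨hAA'.subset this.1, this.2⟩)
      · refine Or.inr (Finset.eq_empty_iff_forall_notMem.mpr (fun z hz => ?_))
        have := Finset.mem_inter.mp hz
        exact hdisjKA K z (hpsub K C h this.2) this.1
    · intro Q hQ
      rcases Finset.mem_insert.mp (hT'3 hQ) with h | h
      · exact Finset.mem_insert_of_mem ((hmemT Q).mpr (Or.inl h))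
      · exact Finset.mem_insert_of_mem ((hmemT Q).mpr (Or.inr (Or.inl h)))
    · intro E hE
      rcases (hmemT E).mp hE with h | h | ⟨K, h⟩
      · subst h
        refine ⟨x, hxA', hxA, fun C hC hCE => hA'subs C hC hCE, hccsd⟩
      · obtain ⟨r, hrE, hrA', hrsub, hrcc⟩ := hT'4 E h
        refine ⟨r, hrE, fun hrA => hrA' (hAA'.subset hrA), ?_, ?_⟩
        · intro C hC hCE
          rcases (hmemT C).mp hC with h2 | h2 | ⟨K, h2⟩
          · exact h2 ▸ hrA'
          · exact hrsub C h2 hCE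
          · exact fun hr => hrA' (Finset.sdiff_subset ((hpsub K C h2).trans (hKsub K) hr))
        · intro D hD
          rcases Finset.mem_insert.mp (hrcc hD) with h2 | h2
          · exact Finset.mem_insert_of_mem ((hmemT D).mpr (Or.inl h2))
          · exact Finset.mem_insert_of_mem ((hmemT D).mpr (Or.inr (Or.inl h2)))
      · obtain ⟨r, hrE, hrsub, hrcc⟩ := (hFk K).2.2.2.1 E h
        refine ⟨r, hrE, hdisjKA K r (hpsub K E h hrE), ?_,
          fun D hD => Finset.mem_insert_of_mem ((hmemT D).mpr (Or.inr (Or.inr ⟨K, hrcc hD⟩)))⟩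
        intro C hC hCE
        exact hrsub C (hcross K E (hpsub K E h) C hC hCE) hCE
    · intro u hu
      by_cases hu' : u ∈ A'
      · by_cases hux : u = x
        · subst hux
          refine ⟨A', (hmemT A').mpr (Or.inl rfl), hu', fun C hC hCE => hA'subs C hC hCE⟩
        · have husd : u ∈ A' \ {x} := Finset.mem_sdiff.mpr ⟨hu', by simpa using hux⟩
          obtain ⟨K₀, hK₀, huK₀⟩ := exists_cc_mem hB husd
          have hK₀A : K₀ ≠ A := fun he => hu (he ▸ huK₀)
          have hK₀e : K₀ ∈ (ccSet B (A' \ {x})).erase A := Finset.mem_erase.mpr ⟨hK₀A, hK₀⟩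
          obtain ⟨E, hE, huE, hEsub⟩ := (hFk ⟨K₀, hK₀e⟩).2.2.2.2 u huK₀
          refine ⟨E, (hmemT E).mpr (Or.inr (Or.inr ⟨_, hE⟩)), huE, ?_⟩
          intro C hC hCE
          exact hEsub C (hcross ⟨K₀, hK₀e⟩ E (hpsub _ E hE) C hC hCE) hCE
      · obtain ⟨E, hE, huE, hEsub⟩ := hT'5 u hu'
        refine ⟨E, (hmemT E).mpr (Or.inr (Or.inl hE)), huE, ?_⟩
        intro C hC hCE
        rcases (hmemT C).mp hC with h2 | h2 | ⟨K, h2⟩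
        · exact h2 ▸ hu'
        · exact hEsub C h2 hCE
        · exact fun huC => hu' (Finset.sdiff_subset ((hpsub K C h2).trans (hKsub K) huC))
section Backward

variable {b b' P : Finset V} {v v' : V}

lemma cc_inner (hB : IsBuildingSet B) (hb : b ∈ B)
    (hvb : v ∈ b) (hv'nb : v' ∉ b) (hbP : b ⊂ P)
    (H1 : ∀ C ∈ B, C ⊆ P → (C ∩ b).Nonempty → ¬ C ⊆ b → v' ∈ C) :
    ccSet B (b \ {v}) ⊆ ccSet B (P \ {v, v'}) := by
  intro C hC
  obtain ⟨hCB, hCsub, hCmax⟩ := mem_ccSet.mp hC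
  have hCP : C ⊆ P \ {v, v'} := by
    intro z hz
    have h1 := Finset.mem_sdiff.mp (hCsub hz)
    refine Finset.mem_sdiff.mpr ⟨hbP.subset h1.1, ?_⟩
    simp only [Finset.mem_insert, Finset.mem_singleton]
    rintro (rfl | rfl)
    · exact h1.2 (Finset.mem_singleton_self _)
    · exact hv'nb h1.1
  refine mem_ccSet.mpr ⟨hCB, hCP, fun E hE hEsub hCE => ?_⟩
  obtain ⟨z, hz⟩ := hB.1 C hCB
  have hEb : (E ∩ b).Nonempty :=
    ⟨z, Finset.mem_inter.mpr ⟨hCE hz, Finset.sdiff_subset (hCsub hz)⟩⟩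
  have hEP : E ⊆ P := hEsub.trans Finset.sdiff_subset
  have hEb2 : E ⊆ b := by
    by_contra hne
    have h2 := H1 E hE hEP hEb hne
    exact (Finset.mem_sdiff.mp (hEsub h2)).2 (by simp)
  have hEbv : E ⊆ b \ {v} := fun z' hz' => Finset.mem_sdiff.mpr ⟨hEb2 hz',
    fun he => (Finset.mem_sdiff.mp (hEsub hz')).2 (by simp [Finset.mem_singleton.mp he])⟩
  exact hCmax E hE hEbv hCE

lemma cc_top (hB : IsBuildingSet B) (hb : b ∈ B)
    (hvb : v ∈ b) (hv'nb : v' ∉ b) (hbP : b ⊂ P)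
    (H1 : ∀ C ∈ B, C ⊆ P → (C ∩ b).Nonempty → ¬ C ⊆ b → v' ∈ C) :
    ccSet B (P \ {v'}) ⊆ insert b (ccSet B (P \ {v, v'})) := by
  intro C hC
  obtain ⟨hCB, hCsub, hCmax⟩ := mem_ccSet.mp hC
  by_cases hCb : C = b
  · exact hCb ▸ Finset.mem_insert_self _ _
  have hvC : v ∉ C := by
    intro hvC
    have hCP : C ⊆ P := hCsub.trans Finset.sdiff_subset
    have hCbint : (C ∩ b).Nonempty := ⟨v, Finset.mem_inter.mpr ⟨hvC, hvb⟩⟩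
    have hCsubb : C ⊆ b := by
      by_contra hnc
      have h2 := H1 C hCB hCP hCbint hnc
      exact (Finset.mem_sdiff.mp (hCsub h2)).2 (Finset.mem_singleton_self _)
    have hbsub : b ⊆ P \ {v'} := fun z hz => Finset.mem_sdiff.mpr
      ⟨hbP.subset hz, fun he => hv'nb ((Finset.mem_singleton.mp he) ▸ hz)⟩
    exact hCb (hCmax b hb hbsub hCsubb)
  refine Finset.mem_insert_of_mem (mem_ccSet.mpr ⟨hCB, ?_, ?_⟩)
  · intro z hz
    have h1 := Finset.mem_sdiff.mp (hCsub hz)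
    refine Finset.mem_sdiff.mpr ⟨h1.1, ?_⟩
    simp only [Finset.mem_insert, Finset.mem_singleton]
    rintro (rfl | rfl)
    · exact hvC hz
    · exact h1.2 (Finset.mem_singleton_self _)
  · intro E hE hEsub hCE
    refine hCmax E hE (hEsub.trans (Finset.sdiff_subset_sdiff (Finset.Subset.refl P)
      (by intro z hz; simp at hz; simp [hz]))) hCE

lemma mkMax (hB : IsBuildingSet B) (hb : b ∈ B) (hP : P ∈ B)
    (hvb : v ∈ b) (hv'nb : v' ∉ b) (hv'P : v' ∈ P) (hbP : b ⊂ P)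
    (H1 : ∀ C ∈ B, C ⊆ P → (C ∩ b).Nonempty → ¬ C ⊆ b → v' ∈ C)
    {I T : Finset (Finset V)} (hI : GSpec B (P \ {v, v'}) I) (hT : USpec B P T) :
    IsMaxNested B (insert b (T ∪ insert P I)) := by
  obtain ⟨hI1, hI2, hI3, hI4, hI5⟩ := hI
  obtain ⟨hT1, hT2, hT3, hT4, hT5⟩ := hT
  set N := insert b (T ∪ insert P I) with hNdef
  have hmemN : ∀ C, C ∈ N ↔ C = b ∨ C ∈ T ∨ C = P ∨ C ∈ I := by
    intro C
    simp only [hNdef, Finset.mem_insert, Finset.mem_union, or_assoc]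
  have hsd : P \ ({v, v'} : Finset V) ⊆ P := Finset.sdiff_subset
  have hnoT : ∀ C ∈ T, ∀ E, E ⊆ P → ¬ C ⊂ E := by
    intro C hC E hE hCE
    rcases hT2 C hC with h | h
    · exact lt_irrefl P (lt_of_lt_of_le h ((hCE.subset.trans hE : C ≤ P)))
    · obtain ⟨z, hz⟩ := hB.1 C (hT1 hC)
      exact Finset.eq_empty_iff_forall_notMem.mp h z
        (Finset.mem_inter.mpr ⟨hE (hCE.subset hz), hz⟩)
  have hIP : ∀ C ∈ I, C ⊆ P := fun C hC => (hI2 C hC).trans hsd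
  have hIv : ∀ C ∈ I, v ∉ C := by
    intro C hC hvC
    have := Finset.mem_sdiff.mp (hI2 C hC hvC)
    simp at this
  have hIv' : ∀ C ∈ I, v' ∉ C := by
    intro C hC hvC
    have := Finset.mem_sdiff.mp (hI2 C hC hvC)
    simp at this
  have hIsubs : ∀ A ∈ I, ∀ C ∈ N, C ⊂ A → C ∈ I := by
    intro A hA C hC hCA
    rcases (hmemN C).mp hC with h | h | h | h
    · exact absurd (hCA.subset (h ▸ hvb)) (hIv A hA)
    · exact absurd hCA (hnoT C h A (hIP A hA))
    · exact absurd (lt_of_lt_of_le (h ▸ hCA : P ⊂ A) (hIP A hA : A ≤ P)) (lt_irrefl P)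
    · exact h
  refine maxCrit hB ?_ ?_ ?_ ?_
  · intro C hC
    rcases (hmemN C).mp hC with h | h | h | h
    · exact h ▸ hb
    · exact hT1 h
    · exact h ▸ hP
    · exact hI1 h
  · intro Q hQ
    rcases Finset.mem_insert.mp (hT3 hQ) with h | h
    · exact (hmemN Q).mpr (Or.inr (Or.inr (Or.inl h)))
    · exact (hmemN Q).mpr (Or.inr (Or.inl h))
  · -- per-element
    intro A hA
    rcases (hmemN A).mp hA with h | h | h | h
    · rw [h]
      refine ⟨v, hvb, ?_, ?_⟩
      · intro C hC hCb
        rcases (hmemN C).mp hC with h | h | h | h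
        · exact absurd h hCb.ne
        · exact absurd hCb (hnoT C h b hbP.subset)
        · exact absurd (h ▸ hCb : P ⊂ b) (fun hh => lt_irrefl b (hbP.trans hh))
        · exact hIv C h
      · intro D hD
        exact (hmemN D).mpr (Or.inr (Or.inr (Or.inr (hI3 (cc_inner hB hb hvb hv'nb hbP H1 hD)))))
    · obtain ⟨r, hrE, hrP, hrsub, hrcc⟩ := hT4 A h
      refine ⟨r, hrE, ?_, ?_⟩
      · intro C hC hCA
        rcases (hmemN C).mp hC with h2 | h2 | h2 | h2
        · exact fun hr => hrP (hbP.subset (h2 ▸ hr))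
        · exact hrsub C h2 hCA
        · exact h2 ▸ hrP
        · exact fun hr => hrP (hIP C h2 hr)
      · intro D hD
        rcases Finset.mem_insert.mp (hrcc hD) with h2 | h2
        · exact (hmemN D).mpr (Or.inr (Or.inr (Or.inl h2)))
        · exact (hmemN D).mpr (Or.inr (Or.inl h2))
    · rw [h]
      refine ⟨v', hv'P, ?_, ?_⟩
      · intro C hC hCP
        rcases (hmemN C).mp hC with h | h | h | h
        · exact h ▸ hv'nb
        · exact absurd hCP (hnoT C h P (Finset.Subset.refl P))
        · exact absurd hCP (h ▸ lt_irrefl P)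
        · exact hIv' C h
      · intro D hD
        rcases Finset.mem_insert.mp (cc_top hB hb hvb hv'nb hbP H1 hD) with h2 | h2
        · exact (hmemN D).mpr (Or.inl h2)
        · exact (hmemN D).mpr (Or.inr (Or.inr (Or.inr (hI3 h2))))
    · obtain ⟨r, hrA, hrsub, hrcc⟩ := hI4 A h
      refine ⟨r, hrA, ?_, fun D hD => (hmemN D).mpr (Or.inr (Or.inr (Or.inr (hrcc hD))))⟩
      intro C hC hCA
      exact hrsub C (hIsubs A h C hC hCA) hCA
  · -- covering
    intro u
    by_cases huP : u ∈ P
    · by_cases huv : u = v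
      · subst huv
        refine ⟨b, (hmemN b).mpr (Or.inl rfl), hvb, ?_⟩
        intro C hC hCb
        rcases (hmemN C).mp hC with h | h | h | h
        · exact absurd h hCb.ne
        · exact absurd hCb (hnoT C h b hbP.subset)
        · exact absurd (h ▸ hCb : P ⊂ b) (fun hh => lt_irrefl b (hbP.trans hh))
        · exact hIv C h
      · by_cases huv' : u = v'
        · subst huv'
          refine ⟨P, (hmemN P).mpr (Or.inr (Or.inr (Or.inl rfl))), huP, ?_⟩
          intro C hC hCP
          rcases (hmemN C).mp hC with h | h | h | h
          · exact h ▸ hv'nb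
          · exact absurd hCP (hnoT C h P (Finset.Subset.refl P))
          · exact absurd hCP (h ▸ lt_irrefl P)
          · exact hIv' C h
        · have husd : u ∈ P \ ({v, v'} : Finset V) := Finset.mem_sdiff.mpr
            ⟨huP, by simp [huv, huv']⟩
          obtain ⟨A, hA, huA, hAsub⟩ := hI5 u husd
          refine ⟨A, (hmemN A).mpr (Or.inr (Or.inr (Or.inr hA))), huA, ?_⟩
          intro C hC hCA
          exact hAsub C (hIsubs A hA C hC hCA) hCA
    · obtain ⟨E, hE, huE, hEsub⟩ := hT5 u huP
      refine ⟨E, (hmemN E).mpr (Or.inr (Or.inl hE)), huE, ?_⟩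
      intro C hC hCE
      rcases (hmemN C).mp hC with h | h | h | h
      · exact fun hu => huP (hbP.subset (h ▸ hu))
      · exact hEsub C h hCE
      · exact h ▸ huP
      · exact fun hu => huP (hIP C h hu)

end Backward
lemma backward (hB : IsBuildingSet B) {b b' P : Finset V} (hb : b ∈ B) (hb' : b' ∈ B)
    (hP : P ∈ B) {v v' : V} (hvb : v ∈ b) (hvnb' : v ∉ b') (hv'b' : v' ∈ b') (hv'nb : v' ∉ b)
    (hbP : b ⊂ P) (hb'P : b' ⊂ P)
    (H1 : ∀ C ∈ B, C ⊆ P → (C ∩ b).Nonempty → ¬ C ⊆ b → v' ∈ C)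
    (H2 : ∀ C ∈ B, C ⊆ P → (C ∩ b').Nonempty → ¬ C ⊆ b' → v ∈ C) :
    ExchangeableB B b b' := by
  obtain ⟨I, hI⟩ := buildDown hB (P \ ({v, v'} : Finset V)).card _ le_rfl
  obtain ⟨T, hT⟩ := buildUp hB (Fintype.card V) P hP (Nat.sub_le _ _)
  have hv'P : v' ∈ P := hb'P.subset hv'b'
  have hvP : v ∈ P := hbP.subset hvb
  have hmax1 := mkMax hB hb hP hvb hv'nb hv'P hbP H1 hI hT
  have hI' : GSpec B (P \ ({v', v} : Finset V)) I := by
    rwa [Finset.pair_comm v' v]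
  have hmax2 := mkMax hB hb' hP hv'b' hvnb' hvP hb'P H2 hI' hT
  have hbne : b ≠ b' := fun he => hvnb' (he ▸ hvb)
  have hbnot : b ∉ T ∪ insert P I := by
    intro hmem
    rcases Finset.mem_union.mp hmem with h | h
    · rcases hT.2.1 b h with h2 | h2
      · exact lt_irrefl b (hbP.trans h2)
      · exact Finset.eq_empty_iff_forall_notMem.mp h2 v
          (Finset.mem_inter.mpr ⟨hvP, hvb⟩)
    · rcases Finset.mem_insert.mp h with h2 | h2
      · exact hbP.ne h2
      · have := Finset.mem_sdiff.mp (hI.2.1 b h2 hvb)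
        simp at this
  have hb'not : b' ∉ T ∪ insert P I := by
    intro hmem
    rcases Finset.mem_union.mp hmem with h | h
    · rcases hT.2.1 b' h with h2 | h2
      · exact lt_irrefl b' (hb'P.trans h2)
      · exact Finset.eq_empty_iff_forall_notMem.mp h2 v'
          (Finset.mem_inter.mpr ⟨hv'P, hv'b'⟩)
    · rcases Finset.mem_insert.mp h with h2 | h2
      · exact hb'P.ne h2
      · have := Finset.mem_sdiff.mp (hI.2.1 b' h2 hv'b')
        simp at this
  refine ⟨hbne, insert b (T ∪ insert P I), insert b' (T ∪ insert P I), hmax1, hmax2,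
    Finset.mem_insert_self _ _, Finset.mem_insert_self _ _, ?_⟩
  rw [Finset.erase_insert hbnot, Finset.erase_insert hb'not]
section Forward

variable {N' : Finset (Finset V)} {b b' P : Finset V}

lemma erase_mem_other (hbN : b ∈ N) (hne : b ≠ b') (her : N.erase b = N'.erase b') :
    b' ∉ N := by
  intro h
  have : b' ∈ N.erase b := Finset.mem_erase.mpr ⟨hne.symm, h⟩
  rw [her] at this
  exact (Finset.mem_erase.mp this).1 rfl

lemma mem_other (her : N.erase b = N'.erase b') {C : Finset V} (hC : C ∈ N) (hCb : C ≠ b) :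
    C ∈ N' := by
  have : C ∈ N.erase b := Finset.mem_erase.mpr ⟨hCb, hC⟩
  rw [her] at this
  exact Finset.mem_of_mem_erase this

lemma fwd_not_sub (hB : IsBuildingSet B) (hN : IsMaxNested B N) (hN' : IsMaxNested B N')
    (hbN : b ∈ N) (hb'N' : b' ∈ N') (hne : b ≠ b') (her : N.erase b = N'.erase b') :
    ¬ b ⊆ b' := by
  intro hsub
  have hb'nN : b' ∉ N := erase_mem_other hbN hne her
  have hnested : IsNested B (insert b' N) := by
    refine ⟨?_, fun K hK hmax => Finset.mem_insert_of_mem (hN.1.2.1 K hK hmax), ?_⟩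
    · intro x hx
      rcases Finset.mem_insert.mp hx with h | h
      · exact h ▸ hN'.1.1 hb'N'
      · exact hN.1.1 h
    · intro X hX hsupB
      by_cases hb'X : b' ∈ X
      · by_cases hbX : b ∈ X
        · have hXe : X.erase b ⊆ N' := by
            intro x hx
            rcases Finset.mem_insert.mp (hX (Finset.mem_of_mem_erase hx)) with h | h
            · exact h ▸ hb'N'
            · exact mem_other her h (Finset.ne_of_mem_erase hx)
          have hsupe : (X.erase b).sup id = X.sup id := by
            apply Finset.Subset.antisymm (sup_mono' (Finset.erase_subset _ _))
            conv_lhs => rw [← Finset.insert_erase hbX]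
            rw [Finset.sup_insert]
            refine Finset.union_subset ?_ le_rfl
            exact (hsub.trans (subset_sup (Finset.mem_erase.mpr ⟨hne.symm, hb'X⟩)) : b ⊆ _)
          rw [← hsupe] at hsupB ⊢
          exact Finset.mem_of_mem_erase (hN'.1.2.2 _ hXe hsupB)
        · have hXN' : X ⊆ N' := by
            intro x hx
            rcases Finset.mem_insert.mp (hX hx) with h | h
            · exact h ▸ hb'N'
            · exact mem_other her h (fun he => hbX (he ▸ hx))
          exact hN'.1.2.2 X hXN' hsupB
      · have hXN : X ⊆ N := fun x hx => (Finset.mem_insert.mp (hX hx)).resolve_left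
          (fun h => hb'X (h ▸ hx))
        exact hN.1.2.2 X hXN hsupB
  exact hb'nN (mem_of_maxNested hN hnested)

lemma fwd_parent (hB : IsBuildingSet B) (hN : IsMaxNested B N) (hN' : IsMaxNested B N')
    (hbN : b ∈ N) (hb'N' : b' ∈ N') (hne : b ≠ b') (her : N.erase b = N'.erase b') :
    ∃ P ∈ N, b ⊂ P ∧ ∀ C ∈ N, b ⊂ C → P ⊆ C := by
  have hbB : b ∈ B := hN.1.1 hbN
  have hbnN' : b ∉ N' := erase_mem_other hb'N' hne.symm her.symm
  have hnotmax : ¬ ∀ C ∈ B, b ⊆ C → b = C := by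
    intro hmax
    exact hbnN' (hN'.1.2.1 b hbB (fun C hC h => hmax C hC h))
  obtain ⟨Q, hQ, hbQ⟩ := exists_maxblock hbB (Finset.subset_univ b)
  have hQN : Q ∈ N := hN.1.2.1 Q (cc_mem_B hQ)
    (fun C hC h => cc_max hQ C hC (Finset.subset_univ C) h)
  have hbQss : b ⊂ Q := Finset.ssubset_iff_subset_ne.mpr ⟨hbQ, fun he => hnotmax
    (fun C hC hsub => by
      rw [← he] at hQ
      exact cc_max hQ C hC (Finset.subset_univ C) hsub)⟩
  exact exists_parent hB hN.1 hbB ⟨Q, hQN, hbQss⟩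

lemma fwd_b'P (hB : IsBuildingSet B) (hN : IsMaxNested B N) (hN' : IsMaxNested B N')
    (hbN : b ∈ N) (hb'N' : b' ∈ N') (hne : b ≠ b') (her : N.erase b = N'.erase b')
    (hPN : P ∈ N) (hbP : b ⊂ P) : b' ⊂ P := by
  have hb'nN : b' ∉ N := erase_mem_other hbN hne her
  have hbnN' : b ∉ N' := erase_mem_other hb'N' hne.symm her.symm
  have hnsub : ¬ b ⊆ b' := fwd_not_sub hB hN hN' hbN hb'N' hne her
  have hPN' : P ∈ N' := mem_other her hPN hbP.ne'
  have hnPb' : ¬ P ⊆ b' := fun h => hnsub (hbP.subset.trans h)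
  by_cases hint : (b' ∩ P).Nonempty
  · rcases nested_comp hB hN'.1 hb'N' hPN' hint with h | h
    · exact Finset.ssubset_iff_subset_ne.mpr ⟨h, fun he => hb'nN (he ▸ hPN)⟩
    · exact absurd h hnPb'
  · exfalso
    have hnn : ¬ IsNested B (insert b N') := fun h => hbnN' (mem_of_maxNested hN' h)
    have hc3 : ¬ ∀ X ⊆ insert b N', X.sup id ∈ B → X.sup id ∈ X := by
      intro h
      refine hnn ⟨?_, fun K hK hmax => Finset.mem_insert_of_mem (hN'.1.2.1 K hK hmax), h⟩
      intro x hx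
      rcases Finset.mem_insert.mp hx with h2 | h2
      · exact h2 ▸ hN.1.1 hbN
      · exact hN'.1.1 h2
    push_neg at hc3
    obtain ⟨X, hX, hsupB, hsupnX⟩ := hc3
    have hbX : b ∈ X := by
      by_contra hbX
      exact hsupnX (hN'.1.2.2 X (fun x hx => (Finset.mem_insert.mp (hX hx)).resolve_left
        (fun h => hbX (h ▸ hx))) hsupB)
    have hb'X : b' ∈ X := by
      by_contra hb'X
      have hXN : X ⊆ N := by
        intro x hx
        rcases Finset.mem_insert.mp (hX hx) with h | h
        · exact h ▸ hbN
        · exact mem_other her.symm h (fun he => hb'X (he ▸ hx))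
      exact hsupnX (hN.1.2.2 X hXN hsupB)
    have hXeN' : X.erase b ⊆ N' := by
      intro x hx
      rcases Finset.mem_insert.mp (hX (Finset.mem_of_mem_erase hx)) with h | h
      · exact absurd h (Finset.ne_of_mem_erase hx)
      · exact h
    have hZN' : insert P (X.erase b) ⊆ N' := by
      intro x hx
      rcases Finset.mem_insert.mp hx with h | h
      · exact h ▸ hPN'
      · exact hXeN' h
    have hbsup : b ⊆ X.sup id := subset_sup hbX
    have hXsup : X.sup id = b ∪ (X.erase b).sup id := by
      conv_lhs => rw [← Finset.insert_erase hbX]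
      rw [Finset.sup_insert]; rfl
    have hPsupB : P ∪ (X.erase b).sup id ∈ B := by
      have h1 : P ∪ X.sup id ∈ B := by
        apply hB.2.1 _ (hN.1.1 hPN) _ hsupB
        obtain ⟨z, hz⟩ := hB.1 b (hN.1.1 hbN)
        exact ⟨z, Finset.mem_inter.mpr ⟨hbP.subset hz, hbsup hz⟩⟩
      have h2 : P ∪ X.sup id = P ∪ (X.erase b).sup id := by
        rw [hXsup, ← Finset.union_assoc, Finset.union_eq_left.mpr hbP.subset]
      rwa [h2] at h1
    have hZsup : (insert P (X.erase b)).sup id = P ∪ (X.erase b).sup id := by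
      rw [Finset.sup_insert]; rfl
    have hmem := hN'.1.2.2 _ hZN' (hZsup ▸ hPsupB)
    rw [hZsup] at hmem
    have hb'e : b' ∈ X.erase b := Finset.mem_erase.mpr ⟨hne.symm, hb'X⟩
    rcases Finset.mem_insert.mp hmem with h | h
    · -- P ∪ sup = P, so b' ⊆ P, contradicting empty intersection
      have hb'P : b' ⊆ P := by
        rw [← h]
        exact (subset_sup hb'e).trans Finset.subset_union_right
      obtain ⟨z, hz⟩ := hB.1 b' (hN'.1.1 hb'N')
      exact hint ⟨z, Finset.mem_inter.mpr ⟨hz, hb'P hz⟩⟩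
    · -- the sup equals an element e of X.erase b
      set e := P ∪ (X.erase b).sup id with hedef
      have heX : e ∈ X.erase b := h
      have heb' : e ≠ b' := fun he2 => hnPb' (he2 ▸ Finset.subset_union_left)
      have heX0 : e ∈ (X.erase b).erase b' := Finset.mem_erase.mpr ⟨heb', heX⟩
      have hX0N' : (X.erase b).erase b' ⊆ N' := (Finset.erase_subset _ _).trans hXeN'
      have hesup : e ⊆ ((X.erase b).erase b').sup id := subset_sup heX0
      have hsupe : (X.erase b).sup id = ((X.erase b).erase b').sup id := by
        apply Finset.Subset.antisymm ?_ (sup_mono' (Finset.erase_subset _ _))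
        conv_lhs => rw [← Finset.insert_erase hb'e]
        rw [Finset.sup_insert]
        refine Finset.union_subset ?_ le_rfl
        exact (((subset_sup hb'e).trans Finset.subset_union_right).trans hesup : b' ⊆ _)
      have hXsup0 : X.sup id = ((X.erase b).erase b').sup id := by
        rw [hXsup, hsupe]
        apply Finset.Subset.antisymm
        · refine Finset.union_subset ?_ le_rfl
          exact (hbP.subset.trans (Finset.subset_union_left.trans hesup) : b ⊆ _)
        · exact Finset.subset_union_right
      have := hN'.1.2.2 _ hX0N' (hXsup0 ▸ hsupB)
      rw [← hXsup0] at this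
      exact hsupnX (Finset.mem_of_mem_erase (Finset.mem_of_mem_erase this))

lemma minroot (hB : IsBuildingSet B) (hN : IsNested B N) {u : V} (hA0 : A ∈ N) (hu : u ∈ A) :
    ∃ D ∈ N, u ∈ root N D ∧ D ⊆ A := by
  obtain ⟨D, hD, huD, hmin⟩ := exists_min_mem hB hN hA0 hu
  refine ⟨D, hD, mem_root_iff.mpr ⟨huD, fun E hE hED huE => ?_⟩, hmin A hA0 hu⟩
  exact hED.ne (Finset.Subset.antisymm hED.subset (hmin E hE huE))

end Forward
lemma forward (hB : IsBuildingSet B) {b b' : Finset V} (hb : b ∈ B) (hb' : b' ∈ B)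
    (hex : ExchangeableB B b b') :
    ∃ P ∈ B, ∃ v ∈ b \ b', ∃ v' ∈ b' \ b, b ⊂ P ∧ b' ⊂ P ∧
      (∀ C ∈ B, C ⊆ P → (C ∩ b).Nonempty → ¬ C ⊆ b → v' ∈ C) ∧
      (∀ C' ∈ B, C' ⊆ P → (C' ∩ b').Nonempty → ¬ C' ⊆ b' → v ∈ C') := by
  obtain ⟨hne, N, N', hN, hN', hbN, hb'N', her⟩ := hex
  have hb'nN : b' ∉ N := erase_mem_other hbN hne her
  have hbnN' : b ∉ N' := erase_mem_other hb'N' hne.symm her.symm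
  have hnsub : ¬ b ⊆ b' := fwd_not_sub hB hN hN' hbN hb'N' hne her
  have hnsub' : ¬ b' ⊆ b := fwd_not_sub hB hN' hN hb'N' hbN hne.symm her.symm
  obtain ⟨P, hPN, hbP, hPmin⟩ := fwd_parent hB hN hN' hbN hb'N' hne her
  obtain ⟨P', hP'N', hb'P', hP'min⟩ := fwd_parent hB hN' hN hb'N' hbN hne.symm her.symm
  have hb'P : b' ⊂ P := fwd_b'P hB hN hN' hbN hb'N' hne her hPN hbP
  have hbP' : b ⊂ P' := fwd_b'P hB hN' hN hb'N' hbN hne.symm her.symm hP'N' hb'P'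
  have hPN' : P ∈ N' := mem_other her hPN hbP.ne'
  have hP'N : P' ∈ N := mem_other her.symm hP'N' hb'P'.ne'
  have hPP' : P = P' := Finset.Subset.antisymm (hPmin P' hP'N hbP') (hP'min P hPN' hb'P)
  rw [← hPP'] at hP'min hb'P' hbP' hP'N'
  clear hPP' hP'N
  obtain ⟨v, hrootb⟩ := root_singleton hB hN hbN
  obtain ⟨v', hrootb'⟩ := root_singleton hB hN' hb'N'
  obtain ⟨w, hrootP⟩ := root_singleton hB hN hPN
  have hvrootb : v ∈ root N b := hrootb ▸ Finset.mem_singleton_self v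
  have hv'rootb' : v' ∈ root N' b' := hrootb' ▸ Finset.mem_singleton_self v'
  have hwrootP : w ∈ root N P := hrootP ▸ Finset.mem_singleton_self w
  have hvb : v ∈ b := root_subset hvrootb
  have hv'b' : v' ∈ b' := root_subset hv'rootb'
  have hwP : w ∈ P := root_subset hwrootP
  have hwnb : w ∉ b := (mem_root_iff.mp hwrootP).2 b hbN hbP
  have hv'P : v' ∈ P := hb'P.subset hv'b'
  -- the roots of shared elements other than P agree
  have hdiff : ∀ C ∈ N, C ≠ b → C ≠ P → root N C = root N' C := by
    intro C hCN hCb hCP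
    have hCN' : C ∈ N' := mem_other her hCN hCb
    have hsupeq : (N.filter (fun D => D ⊂ C)).sup id = (N'.filter (fun D => D ⊂ C)).sup id := by
      apply Finset.Subset.antisymm
      · show (N.filter (fun D => D ⊂ C)).sup id ≤ _
        apply Finset.sup_le
        intro D hD
        rw [Finset.mem_filter] at hD
        by_cases hDb : D = b
        · have hPC : P ⊆ C := hPmin C hCN (hDb ▸ hD.2)
          have hPCss : P ⊂ C := Finset.ssubset_iff_subset_ne.mpr
            ⟨hPC, fun he => hCP he.symm⟩
          have h1 : P ⊆ (N'.filter (fun D => D ⊂ C)).sup id :=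
            subset_sup (Finset.mem_filter.mpr ⟨hPN', hPCss⟩)
          exact ((hDb ▸ hbP.subset : D ⊆ P).trans h1 : id D ≤ _)
        · exact subset_sup (Finset.mem_filter.mpr ⟨mem_other her hD.1 hDb, hD.2⟩)
      · show (N'.filter (fun D => D ⊂ C)).sup id ≤ _
        apply Finset.sup_le
        intro D hD
        rw [Finset.mem_filter] at hD
        by_cases hDb' : D = b'
        · have hPC : P ⊆ C := hP'min C hCN' (hDb' ▸ hD.2)
          have hPCss : P ⊂ C := Finset.ssubset_iff_subset_ne.mpr
            ⟨hPC, fun he => hCP he.symm⟩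
          have h1 : P ⊆ (N.filter (fun D => D ⊂ C)).sup id :=
            subset_sup (Finset.mem_filter.mpr ⟨hPN, hPCss⟩)
          exact ((hDb' ▸ hb'P.subset : D ⊆ P).trans h1 : id D ≤ _)
        · exact subset_sup (Finset.mem_filter.mpr ⟨mem_other her.symm hD.1 hDb', hD.2⟩)
    unfold root
    rw [hsupeq]
  -- v ≠ v'
  have hvv' : v ≠ v' := by
    intro heq
    have hvb' : v ∈ b' := heq ▸ hv'b'
    have hwnb' : w ∉ b' := by
      intro hwb'
      obtain ⟨E, hEN', hwE, hEb'⟩ := minroot hB hN'.1 hb'N' hwb'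
      by_cases hEb'eq : E = b'
      · rw [hEb'eq, hrootb'] at hwE
        have h2 : w = v' := Finset.mem_singleton.mp hwE
        exact hwnb (h2 ▸ heq ▸ hvb)
      · have hEN : E ∈ N := mem_other her.symm hEN' hEb'eq
        have hEb : E ≠ b := fun he => hnsub (he ▸ hEb')
        have hEP : E ≠ P := fun he => hnsub (hbP.subset.trans (he ▸ hEb'))
        have h3 := hdiff E hEN hEb hEP
        rw [← h3] at hwE
        exact hEP (root_eq_of_mem hB hN.1 hEN hPN hwE hwrootP)
    have hbb'B : b ∪ b' ∈ B := hB.2.1 _ hb _ hb' ⟨v, Finset.mem_inter.mpr ⟨hvb, hvb'⟩⟩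
    have hsub : ∀ C ∈ N, C ⊂ P → C ⊆ P \ {w} := by
      intro C hC hCP z hz
      exact Finset.mem_sdiff.mpr ⟨hCP.subset hz, fun hzw =>
        (mem_root_iff.mp hwrootP).2 C hC hCP ((Finset.mem_singleton.mp hzw) ▸ hz)⟩
    have hWsub : b ∪ b' ⊆ P \ {w} := Finset.union_subset
      (fun z hz => Finset.mem_sdiff.mpr ⟨hbP.subset hz,
        fun hzw => hwnb ((Finset.mem_singleton.mp hzw) ▸ hz)⟩)
      (fun z hz => Finset.mem_sdiff.mpr ⟨hb'P.subset hz,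
        fun hzw => hwnb' ((Finset.mem_singleton.mp hzw) ▸ hz)⟩)
    obtain ⟨K, hKN, hWK, hKS⟩ := growInside hB hN hPN Finset.sdiff_subset hsub hbb'B hWsub
    have hbK : b ⊂ K := Finset.ssubset_iff_subset_ne.mpr
      ⟨Finset.subset_union_left.trans hWK,
       fun he => hnsub' (he ▸ (Finset.subset_union_right.trans hWK))⟩
    have hPK := hPmin K hKN hbK
    exact (Finset.mem_sdiff.mp (hKS (hPK hwP))).2 (Finset.mem_singleton_self w)
  -- v' is the root of P in N
  have hv'rootP : v' ∈ root N P := by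
    obtain ⟨D, hDN, hv'D, hDP⟩ := minroot hB hN.1 hPN hv'P
    by_cases hDb : D = b
    · rw [hDb, hrootb] at hv'D
      exact absurd (Finset.mem_singleton.mp hv'D).symm hvv'
    by_cases hDPeq : D = P
    · exact hDPeq ▸ hv'D
    · have h3 := hdiff D hDN hDb hDPeq
      rw [h3] at hv'D
      have h4 : D = b' := root_eq_of_mem hB hN'.1 (mem_other her hDN hDb) hb'N' hv'D hv'rootb'
      exact absurd (h4 ▸ hDN) hb'nN
  -- v is the root of P in N'
  have hvrootP' : v ∈ root N' P := by
    obtain ⟨D, hDN', hvD, hDP⟩ := minroot hB hN'.1 hPN' (hbP.subset hvb)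
    by_cases hDb' : D = b'
    · rw [hDb', hrootb'] at hvD
      exact absurd (Finset.mem_singleton.mp hvD) hvv'
    by_cases hDPeq : D = P
    · exact hDPeq ▸ hvD
    · have hDN : D ∈ N := mem_other her.symm hDN' hDb'
      have h3 := hdiff D hDN (fun he => hbnN' (he ▸ hDN')) hDPeq
      rw [← h3] at hvD
      have h4 : D = b := root_eq_of_mem hB hN.1 hDN hbN hvD hvrootb
      exact absurd (h4 ▸ hDN') hbnN'
  have hvnb' : v ∉ b' := (mem_root_iff.mp hvrootP').2 b' hb'N' hb'P
  have hv'nb : v' ∉ b := (mem_root_iff.mp hv'rootP).2 b hbN hbP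
  refine ⟨P, hN.1.1 hPN, v, Finset.mem_sdiff.mpr ⟨hvb, hvnb'⟩,
    v', Finset.mem_sdiff.mpr ⟨hv'b', hv'nb⟩, hbP, hb'P, ?_, ?_⟩
  · intro C hC hCP hCb hnCb
    by_contra hv'C
    have hsub : ∀ D ∈ N, D ⊂ P → D ⊆ P \ {v'} := by
      intro D hD hDP z hz
      exact Finset.mem_sdiff.mpr ⟨hDP.subset hz, fun hzw =>
        (mem_root_iff.mp hv'rootP).2 D hD hDP ((Finset.mem_singleton.mp hzw) ▸ hz)⟩
    have hWB : b ∪ C ∈ B := by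
      apply hB.2.1 _ hb _ hC
      obtain ⟨z, hz⟩ := hCb
      rw [Finset.mem_inter] at hz
      exact ⟨z, Finset.mem_inter.mpr ⟨hz.2, hz.1⟩⟩
    have hWsub : b ∪ C ⊆ P \ {v'} := Finset.union_subset
      (fun z hz => Finset.mem_sdiff.mpr ⟨hbP.subset hz,
        fun hzw => hv'nb ((Finset.mem_singleton.mp hzw) ▸ hz)⟩)
      (fun z hz => Finset.mem_sdiff.mpr ⟨hCP hz,
        fun hzw => hv'C ((Finset.mem_singleton.mp hzw) ▸ hz)⟩)
    obtain ⟨K, hKN, hWK, hKS⟩ := growInside hB hN hPN Finset.sdiff_subset hsub hWB hWsub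
    have hbK : b ⊂ K := Finset.ssubset_iff_subset_ne.mpr
      ⟨Finset.subset_union_left.trans hWK,
       fun he => hnCb (he ▸ (Finset.subset_union_right.trans hWK))⟩
    have hPK := hPmin K hKN hbK
    exact (Finset.mem_sdiff.mp (hKS (hPK hv'P))).2 (Finset.mem_singleton_self v')
  · intro C hC hCP hCb' hnCb'
    by_contra hvC
    have hsub : ∀ D ∈ N', D ⊂ P → D ⊆ P \ {v} := by
      intro D hD hDP z hz
      exact Finset.mem_sdiff.mpr ⟨hDP.subset hz, fun hzw =>
        (mem_root_iff.mp hvrootP').2 D hD hDP ((Finset.mem_singleton.mp hzw) ▸ hz)⟩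
    have hWB : b' ∪ C ∈ B := by
      apply hB.2.1 _ hb' _ hC
      obtain ⟨z, hz⟩ := hCb'
      rw [Finset.mem_inter] at hz
      exact ⟨z, Finset.mem_inter.mpr ⟨hz.2, hz.1⟩⟩
    have hWsub : b' ∪ C ⊆ P \ {v} := Finset.union_subset
      (fun z hz => Finset.mem_sdiff.mpr ⟨hb'P.subset hz,
        fun hzw => hvnb' ((Finset.mem_singleton.mp hzw) ▸ hz)⟩)
      (fun z hz => Finset.mem_sdiff.mpr ⟨hCP hz,
        fun hzw => hvC ((Finset.mem_singleton.mp hzw) ▸ hz)⟩)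
    obtain ⟨K, hKN', hWK, hKS⟩ := growInside hB hN' hPN' Finset.sdiff_subset hsub hWB hWsub
    have hb'K : b' ⊂ K := Finset.ssubset_iff_subset_ne.mpr
      ⟨Finset.subset_union_left.trans hWK,
       fun he => hnCb' (he ▸ (Finset.subset_union_right.trans hWK))⟩
    have hPK := hP'min K hKN' hb'K
    exact (Finset.mem_sdiff.mp (hKS (hPK (hbP.subset hvb)))).2 (Finset.mem_singleton_self v)
end Stmt6Aux

theorem stmt6 (B : Finset (Finset V)) (hB : IsBuildingSet B)
    (b b' : Finset V) (hb : b ∈ B) (hb' : b' ∈ B) :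
    ExchangeableB B b b' ↔
      ∃ P ∈ B, ∃ v ∈ b \ b', ∃ v' ∈ b' \ b,
        b ⊂ P ∧ b' ⊂ P ∧
        (∀ C ∈ B, C ⊆ P → (C ∩ b).Nonempty → ¬ C ⊆ b → v' ∈ C) ∧
        (∀ C' ∈ B, C' ⊆ P → (C' ∩ b').Nonempty → ¬ C' ⊆ b' → v ∈ C') := by
  constructor
  · intro hex
    exact Stmt6Aux.forward hB hb hb' hex
  · rintro ⟨P, hP, v, hv, v', hv', hbP, hb'P, H1, H2⟩
    rw [Finset.mem_sdiff] at hv hv'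
    exact Stmt6Aux.backward hB hb hb' hP hv.1 hv.2 hv'.1 hv'.2 hbP hb'P H1 H2
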